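/- In the Eisenberg-Noe model with $\bar p_{i0} > 0$ for all $i$, the clearing payment function $p : \mathbb{R}^N_+ \to \mathbb{R}^N_+$ is increasing: if $x \le x'$ componentwise, then $p(x) \le p(x')$ componentwise. -/

import Mathlib

/-- `p` is the (nonnegative) Eisenberg-Noe clearing payment vector for asset
vector `x` in the network with interbank obligations `pbar` and obligations to
society `pbar0`. -/
def IsClearing {N : ℕ} (pbar : Fin N → Fin N → ℝ) (pbar0 : Fin N → ℝ)
    (x p : Fin N → ℝ) : Prop :=
  (∀ i, 0 ≤ p i) ∧
    ∀ i, p i = min (pbar0 i + ∑ j, pbar i j)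
      (x i + ∑ j, (pbar j i / (pbar0 j + ∑ k, pbar j k)) * p j)

/-- The Eisenberg-Noe clearing payment function is increasing. -/
theorem eisenberg_noe_clearing_monotone
    {N : ℕ} (pbar : Fin N → Fin N → ℝ) (pbar0 : Fin N → ℝ)
    (hnn : ∀ i j, 0 ≤ pbar i j) (hdiag : ∀ i, pbar i i = 0)
    (hpos : ∀ i, 0 < pbar0 i)
    (x x' p p' : Fin N → ℝ) (hx : ∀ i, 0 ≤ x i) (hx' : ∀ i, 0 ≤ x' i)
    (hxx' : x ≤ x')
    (hp : IsClearing pbar pbar0 x p) (hp' : IsClearing pbar pbar0 x' p') :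
    p ≤ p' := by
  obtain ⟨hp0, hpe⟩ := hp
  obtain ⟨hp0', hpe'⟩ := hp'
  set pb : Fin N → ℝ := fun j => pbar0 j + ∑ k, pbar j k with hpbdef
  have hpbpos : ∀ j, 0 < pb j := fun j =>
    add_pos_of_pos_of_nonneg (hpos j) (Finset.sum_nonneg fun k _ => hnn j k)
  set d : Fin N → ℝ := fun i => max (p i - p' i) 0 with hddef
  have hd0 : ∀ i, 0 ≤ d i := fun i => le_max_right _ _
  have key : ∀ i, d i ≤ ∑ j, (pbar j i / pb j) * d j := by
    intro i
    have hS : 0 ≤ ∑ j, (pbar j i / pb j) * d j :=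
      Finset.sum_nonneg fun j _ =>
        mul_nonneg (div_nonneg (hnn j i) (hpbpos j).le) (hd0 j)
    refine max_le ?_ hS
    rw [hpe i, hpe' i]
    have hBB' : (x i + ∑ j, (pbar j i / pb j) * p j)
        ≤ (x' i + ∑ j, (pbar j i / pb j) * p' j) + ∑ j, (pbar j i / pb j) * d j := by
      rw [add_assoc, ← Finset.sum_add_distrib]
      refine add_le_add (hxx' i) (Finset.sum_le_sum fun j _ => ?_)
      rw [← mul_add]
      refine mul_le_mul_of_nonneg_left ?_ (div_nonneg (hnn j i) (hpbpos j).le)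
      have h1 := le_max_left (p j - p' j) (0 : ℝ)
      have : p j - p' j ≤ d j := h1
      linarith
    have hcalc : min (pbar0 i + ∑ j, pbar i j) (x i + ∑ j, pbar j i / pb j * p j)
        ≤ min (pbar0 i + ∑ j, pbar i j) (x' i + ∑ j, pbar j i / pb j * p' j)
          + ∑ j, pbar j i / pb j * d j := by
      calc min (pbar0 i + ∑ j, pbar i j) (x i + ∑ j, pbar j i / pb j * p j)
          ≤ min (pbar0 i + ∑ j, pbar i j)
              ((x' i + ∑ j, pbar j i / pb j * p' j) + ∑ j, pbar j i / pb j * d j) :=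
            min_le_min le_rfl hBB'
        _ ≤ min ((pbar0 i + ∑ j, pbar i j) + ∑ j, pbar j i / pb j * d j)
              ((x' i + ∑ j, pbar j i / pb j * p' j) + ∑ j, pbar j i / pb j * d j) :=
            min_le_min (le_add_of_nonneg_right hS) le_rfl
        _ = min (pbar0 i + ∑ j, pbar i j) (x' i + ∑ j, pbar j i / pb j * p' j)
              + ∑ j, pbar j i / pb j * d j := min_add_add_right _ _ _
    linarith
  have hsum : ∑ i, d i ≤ ∑ j, ((∑ i, pbar j i) / pb j) * d j := by
    calc ∑ i, d i ≤ ∑ i, ∑ j, (pbar j i / pb j) * d j :=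
          Finset.sum_le_sum fun i _ => key i
      _ = ∑ j, ∑ i, (pbar j i / pb j) * d j := Finset.sum_comm
      _ = ∑ j, ((∑ i, pbar j i) / pb j) * d j := by
          refine Finset.sum_congr rfl fun j _ => ?_
          rw [← Finset.sum_mul, ← Finset.sum_div]
  have hzsum : ∑ j, (pbar0 j / pb j) * d j ≤ 0 := by
    have hone : ∀ j, ((∑ i, pbar j i) / pb j) * d j + (pbar0 j / pb j) * d j = d j := by
      intro j
      rw [← add_mul, ← add_div]
      have : (∑ i, pbar j i) + pbar0 j = pb j := by
        simp only [hpbdef]; ring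
      rw [this, div_self (hpbpos j).ne', one_mul]
    have := Finset.sum_add_distrib (s := Finset.univ)
      (f := fun j => ((∑ i, pbar j i) / pb j) * d j)
      (g := fun j => (pbar0 j / pb j) * d j)
    have heq : ∑ j, (((∑ i, pbar j i) / pb j) * d j + (pbar0 j / pb j) * d j)
        = ∑ j, d j := Finset.sum_congr rfl fun j _ => hone j
    linarith [hsum, this, heq]
  have hdzero : ∀ j, d j = 0 := by
    have hnn' : ∀ j ∈ Finset.univ, 0 ≤ (pbar0 j / pb j) * d j := fun j _ =>
      mul_nonneg (div_nonneg (hpos j).le (hpbpos j).le) (hd0 j)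
    have hsum0 : ∑ j, (pbar0 j / pb j) * d j = 0 :=
      le_antisymm hzsum (Finset.sum_nonneg hnn')
    intro j
    have := (Finset.sum_eq_zero_iff_of_nonneg hnn').mp hsum0 j (Finset.mem_univ j)
    have hne : pbar0 j / pb j ≠ 0 := (div_pos (hpos j) (hpbpos j)).ne'
    exact (mul_eq_zero.mp this).resolve_left hne
  intro i
  have h1 : p i - p' i ≤ d i := le_max_left _ _
  have := hdzero i
  simp only [Pi.le_def] at *
  linarith
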